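/- For A ∈ M_n(ℍ), Sdet(A) > 0 if and only if A is invertible. -/

import Mathlib

open Matrix

/-- The complex "X" part of a quaternion `q = X + jY`. -/
def qPartX (q : Quaternion ℝ) : ℂ := ⟨q.re, q.imI⟩

/-- The complex "Y" part of a quaternion `q = X + jY`. -/
def qPartY (q : Quaternion ℝ) : ℂ := ⟨q.imJ, -q.imK⟩

/-- The complex matrix `c(A) = [[X, -conj Y],[Y, conj X]]` associated to `A = X + jY`. -/
def cMat {m : Type} [Fintype m] [DecidableEq m] (A : Matrix m m (Quaternion ℝ)) :
    Matrix (m ⊕ m) (m ⊕ m) ℂ :=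
  Matrix.fromBlocks (A.map qPartX) (A.map fun q => -(starRingEnd ℂ) (qPartY q))
    (A.map qPartY) (A.map fun q => (starRingEnd ℂ) (qPartX q))

/-- Study's determinant `Sdet A = (det c(A))^(1/2)`. -/
noncomputable def Sdet {m : Type} [Fintype m] [DecidableEq m]
    (A : Matrix m m (Quaternion ℝ)) : ℝ :=
  Real.sqrt (cMat A).det.re

abbrev H := Quaternion ℝ
open scoped Quaternion

lemma qPartX_mul (p r : H) : qPartX (p * r) =
    qPartX p * qPartX r - (starRingEnd ℂ) (qPartY p) * qPartY r := by
  apply Complex.ext <;>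
  simp [qPartX, qPartY, Quaternion.re_mul, Quaternion.imI_mul, Complex.ext_iff] <;> ring
lemma qPartY_mul (p r : H) : qPartY (p * r) =
    qPartY p * qPartX r + (starRingEnd ℂ) (qPartX p) * qPartY r := by
  apply Complex.ext <;>
  simp [qPartX, qPartY, Quaternion.imJ_mul, Quaternion.imK_mul, Complex.ext_iff] <;> ring
lemma qPartX_one : qPartX 1 = 1 := by simp [qPartX, Complex.ext_iff]
lemma qPartY_one : qPartY 1 = 0 := by simp [qPartY, Complex.ext_iff]
lemma qPartX_zero : qPartX 0 = 0 := by simp [qPartX, Complex.ext_iff]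
lemma qPartY_zero : qPartY 0 = 0 := by simp [qPartY, Complex.ext_iff]

def qPartXa : H →+ ℂ where
  toFun := qPartX
  map_zero' := qPartX_zero
  map_add' p r := by simp [qPartX, Complex.ext_iff]
def qPartYa : H →+ ℂ where
  toFun := qPartY
  map_zero' := qPartY_zero
  map_add' p r := by simp [qPartY, Complex.ext_iff]; ring

variable {m : Type} [Fintype m] [DecidableEq m]

lemma cMat_one : cMat (1 : Matrix m m H) = 1 := by
  ext i j
  rcases i with i | i <;> rcases j with j | j <;>
    by_cases h : i = j <;>
    simp [cMat, Matrix.one_apply, h, qPartX_zero, qPartX_one, qPartY_zero, qPartY_one]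

lemma cMat_mul (A B : Matrix m m H) : cMat (A * B) = cMat A * cMat B := by
  ext i j
  rcases i with i | i <;> rcases j with j | j <;>
  · simp only [cMat, fromBlocks_apply₁₁, fromBlocks_apply₁₂, fromBlocks_apply₂₁,
      fromBlocks_apply₂₂, Matrix.map_apply, Matrix.mul_apply, Fintype.sum_sum_type,
      fromBlocks_apply₁₁, fromBlocks_apply₁₂, fromBlocks_apply₂₁, fromBlocks_apply₂₂]
    rw [show qPartX = ⇑qPartXa from rfl, show qPartY = ⇑qPartYa from rfl, map_sum]
    simp only [show ∀ p, qPartXa p = qPartX p from fun _ => rfl, show ∀ p, qPartYa p = qPartY p from fun _ => rfl, AddMonoidHom.coe_mk, ZeroHom.coe_mk, qPartX_mul, qPartY_mul,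
      map_sum, _root_.map_mul, map_sub, map_add, Finset.sum_sub_distrib, Finset.sum_add_distrib,
      Finset.sum_neg_distrib, neg_mul, mul_neg, sub_eq_add_neg]
    try simp only [map_zsmul, map_neg, map_sum, _root_.map_mul, Complex.conj_conj]
    try abel

def Jm (m : Type) [Fintype m] [DecidableEq m] : Matrix (m ⊕ m) (m ⊕ m) ℂ :=
  fromBlocks 0 (-1) 1 0

lemma Jm_mul_cMat (A : Matrix m m H) :
    Jm m * cMat A = (cMat A).map (starRingEnd ℂ) * Jm m := by
  ext i j
  rcases i with i | i <;> rcases j with j | j <;>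
    simp [Jm, cMat, Matrix.mul_apply, Fintype.sum_sum_type, Matrix.one_apply, eq_comm]

lemma Jm_mul_Jm : Jm m * Jm m = -1 := by
  ext i j
  rcases i with i | i <;> rcases j with j | j <;>
    simp [Jm, Matrix.mul_apply, Fintype.sum_sum_type, Matrix.one_apply, eq_comm]

lemma det_Jm_ne_zero : det (Jm m) ≠ 0 := by
  intro h
  have h2 : det (Jm m * Jm m) = det (-1 : Matrix (m ⊕ m) (m ⊕ m) ℂ) := by rw [Jm_mul_Jm]
  rw [det_mul, h, mul_zero] at h2
  have : det (-1 : Matrix (m ⊕ m) (m ⊕ m) ℂ) ≠ 0 := by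
    rw [show (-1 : Matrix (m ⊕ m) (m ⊕ m) ℂ) = -(1:Matrix (m ⊕ m) (m ⊕ m) ℂ) from rfl,
      Matrix.det_neg, det_one, mul_one]
    exact pow_ne_zero _ (neg_ne_zero.mpr one_ne_zero)
  exact this h2.symm

lemma conj_det_cMat (A : Matrix m m H) :
    (starRingEnd ℂ) (det (cMat A)) = det (cMat A) := by
  have h := congrArg det (Jm_mul_cMat A)
  rw [det_mul, det_mul] at h
  have hmap : (starRingEnd ℂ) (cMat A).det = ((cMat A).map ⇑(starRingEnd ℂ)).det :=
    RingHom.map_det _ _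
  rw [hmap]
  apply mul_left_cancel₀ (det_Jm_ne_zero (m := m))
  rw [h]; ring

lemma im_det_cMat (A : Matrix m m H) : (det (cMat A)).im = 0 :=
  Complex.conj_eq_iff_im.mp (conj_det_cMat A)

lemma cMat_injective : Function.Injective (cMat (m := m)) := by
  intro A B h
  have hX : ∀ i j, qPartX (A i j) = qPartX (B i j) := fun i j => by
    simpa [cMat] using congrFun (congrFun h (Sum.inl i)) (Sum.inl j)
  have hY : ∀ i j, qPartY (A i j) = qPartY (B i j) := fun i j => by
    simpa [cMat] using congrFun (congrFun h (Sum.inr i)) (Sum.inl j)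
  ext i j
  · exact congrArg Complex.re (hX i j)
  · exact congrArg Complex.im (hX i j)
  · exact congrArg Complex.re (hY i j)
  · exact neg_injective (congrArg Complex.im (hY i j))

lemma exists_cMat_of_J (M : Matrix (m ⊕ m) (m ⊕ m) ℂ)
    (hM : Jm m * M = M.map (starRingEnd ℂ) * Jm m) : ∃ B, cMat B = M := by
  refine ⟨fun i j => ⟨(M (Sum.inl i) (Sum.inl j)).re, (M (Sum.inl i) (Sum.inl j)).im,
    (M (Sum.inr i) (Sum.inl j)).re, -(M (Sum.inr i) (Sum.inl j)).im⟩, ?_⟩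
  have key : ∀ i j, (Jm m * M) i j = (M.map (starRingEnd ℂ) * Jm m) i j := by
    intro i j; rw [hM]
  ext i j
  rcases i with i | i <;> rcases j with j | j
  · simp [cMat, qPartX, Complex.ext_iff, Matrix.map, Matrix.of_apply]
  · have h1 := key (Sum.inl i) (Sum.inl j)
    simp [Jm, Matrix.mul_apply, Fintype.sum_sum_type, Matrix.one_apply, eq_comm] at h1
    simp only [cMat, fromBlocks_apply₁₂, Matrix.map_apply]
    rw [show M (Sum.inl i) (Sum.inr j) = -(starRingEnd ℂ) (M (Sum.inr i) (Sum.inl j)) by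
      have h2 := congrArg (starRingEnd ℂ) h1
      simpa [eq_comm] using h2]
    simp [qPartY, Complex.ext_iff, Matrix.map, Matrix.of_apply]
  · simp [cMat, qPartY, Complex.ext_iff, Matrix.map, Matrix.of_apply]
  · have h1 := key (Sum.inl i) (Sum.inr j)
    simp [Jm, Matrix.mul_apply, Fintype.sum_sum_type, Matrix.one_apply, eq_comm] at h1
    simp only [cMat, fromBlocks_apply₂₂, Matrix.map_apply]
    rw [show M (Sum.inr i) (Sum.inr j) = (starRingEnd ℂ) (M (Sum.inl i) (Sum.inl j)) from by
      rw [h1]]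
    simp [qPartX, Complex.ext_iff, Matrix.map, Matrix.of_apply]

lemma isUnit_cMat_iff (A : Matrix m m H) : IsUnit (cMat A) ↔ IsUnit A := by
  refine ⟨fun h => ?_, fun h => ?_⟩
  · set N : Matrix (m ⊕ m) (m ⊕ m) ℂ := ↑h.unit⁻¹ with hN
    have hMN : cMat A * N = 1 := h.unit.mul_inv
    have hNM : N * cMat A = 1 := h.unit.inv_mul
    have hNMc : N.map (starRingEnd ℂ) * (cMat A).map (starRingEnd ℂ) = 1 := by
      rw [← Matrix.map_mul, hNM, Matrix.map_one _ (map_zero _) (map_one _)]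
    have hG : Jm m * N = N.map (starRingEnd ℂ) * Jm m := by
      calc Jm m * N = N.map (starRingEnd ℂ) * ((cMat A).map (starRingEnd ℂ) * Jm m) * N := by
            rw [← Matrix.mul_assoc, hNMc, Matrix.one_mul]
        _ = N.map (starRingEnd ℂ) * (Jm m * cMat A) * N := by rw [Jm_mul_cMat]
        _ = N.map (starRingEnd ℂ) * Jm m * (cMat A * N) := by
            rw [Matrix.mul_assoc, Matrix.mul_assoc, Matrix.mul_assoc]
        _ = N.map (starRingEnd ℂ) * Jm m := by rw [hMN, Matrix.mul_one]
    obtain ⟨B, hB⟩ := exists_cMat_of_J N hG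
    have h1 : A * B = 1 := cMat_injective (by rw [cMat_mul, hB, hMN, cMat_one])
    have h2 : B * A = 1 := cMat_injective (by rw [cMat_mul, hB, hNM, cMat_one])
    exact ⟨⟨A, B, h1, h2⟩, rfl⟩
  · obtain ⟨u, hu⟩ := h
    refine ⟨⟨cMat A, cMat (Units.val u⁻¹), ?_, ?_⟩, rfl⟩
    · rw [← cMat_mul, ← hu, u.mul_inv, cMat_one]
    · rw [← cMat_mul, ← hu, u.inv_mul, cMat_one]

/-! block machinery -/

def cG {a b : Type} (M : Matrix a b H) : Matrix (a ⊕ a) (b ⊕ b) ℂ :=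
  Matrix.fromBlocks (M.map qPartX) (M.map fun q => -(starRingEnd ℂ) (qPartY q))
    (M.map qPartY) (M.map fun q => (starRingEnd ℂ) (qPartX q))

variable {k : Type} [Fintype k] [DecidableEq k]

lemma cMat_fromBlocks (A : Matrix m m H) (B : Matrix m k H) (C : Matrix k m H)
    (D : Matrix k k H) :
    cMat (fromBlocks A B C D) =
      (fromBlocks (cG A) (cG B) (cG C) (cG D)).submatrix
        (Equiv.sumSumSumComm m k m k) (Equiv.sumSumSumComm m k m k) := by
  ext i j
  rcases i with (i | i) | (i | i) <;> rcases j with (j | j) | (j | j) <;>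
    simp [cMat, cG, Equiv.sumSumSumComm, Equiv.sumAssoc, Equiv.sumComm]

lemma cG_zero : cG (0 : Matrix m k H) = 0 := by
  ext i j
  rcases i with i | i <;> rcases j with j | j <;>
    simp [cG, qPartX, qPartY, Complex.ext_iff]

lemma det_cMat_blockdiag (A : Matrix m m H) (D : Matrix k k H) :
    det (cMat (fromBlocks A 0 0 D)) = det (cMat A) * det (cMat D) := by
  rw [cMat_fromBlocks, det_submatrix_equiv_self, cG_zero, cG_zero, det_fromBlocks_zero₂₁]
  rfl

lemma det_cMat_upper (B : Matrix m k H) : det (cMat (fromBlocks 1 B 0 1)) = 1 := by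
  rw [cMat_fromBlocks, det_submatrix_equiv_self, cG_zero, det_fromBlocks_zero₂₁,
    show cG (1 : Matrix m m H) = 1 from cMat_one,
    show cG (1 : Matrix k k H) = 1 from cMat_one]
  simp

lemma det_cMat_lower (C : Matrix k m H) : det (cMat (fromBlocks 1 0 C 1)) = 1 := by
  rw [cMat_fromBlocks, det_submatrix_equiv_self, cG_zero, det_fromBlocks_zero₁₂,
    show cG (1 : Matrix m m H) = 1 from cMat_one,
    show cG (1 : Matrix k k H) = 1 from cMat_one]
  simp

lemma cMat_submatrix (M : Matrix m m H) (e f : k → m) :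
    cMat (M.submatrix e f) = (cMat M).submatrix (Sum.map e e) (Sum.map f f) := by
  ext i j
  rcases i with i | i <;> rcases j with j | j <;> simp [cMat]

lemma det_cMat_submatrix_equiv (M : Matrix m m H) (e : k ≃ m) :
    det (cMat (M.submatrix e e)) = det (cMat M) := by
  rw [cMat_submatrix]
  have : (cMat M).submatrix (Sum.map ⇑e ⇑e) (Sum.map ⇑e ⇑e)
      = (cMat M).submatrix (Equiv.sumCongr e e) (Equiv.sumCongr e e) := rfl
  rw [this, det_submatrix_equiv_self]

lemma det_cMat_permute (σ : Equiv.Perm m) (M : Matrix m m H) :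
    det (cMat (M.submatrix σ id)) = det (cMat M) := by
  have h : cMat (M.submatrix ⇑σ id) = (cMat M).submatrix (Equiv.sumCongr σ σ) id := by
    rw [cMat_submatrix]
    ext i j
    rcases i with i | i <;> rcases j with j | j <;> simp
  rw [h, Matrix.det_permute, Equiv.Perm.sign_sumCongr]
  simp

lemma det_cMat_one_dim (A : Matrix (Fin 1) (Fin 1) H) (hA : A 0 0 ≠ 0) :
    0 < (det (cMat A)).re := by
  have h := Matrix.det_submatrix_equiv_self
    (finSumFinEquiv (m := 1) (n := 1)).symm (cMat A)
  rw [← h, Matrix.det_fin_two]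
  have e0 : (finSumFinEquiv (m := 1) (n := 1)).symm 0 = Sum.inl 0 := rfl
  have e1 : (finSumFinEquiv (m := 1) (n := 1)).symm 1 = Sum.inr 0 := rfl
  simp only [Matrix.submatrix_apply, e0, e1]
  have hx : ¬ (qPartX (A 0 0) = 0 ∧ qPartY (A 0 0) = 0) := by
    rintro ⟨h1, h2⟩
    apply hA
    ext <;> simp_all [qPartX, qPartY, Complex.ext_iff]
  simp only [cMat, fromBlocks_apply₁₁, fromBlocks_apply₁₂, fromBlocks_apply₂₁,
    fromBlocks_apply₂₂, Matrix.map_apply]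
  set x := qPartX (A 0 0)
  set y := qPartY (A 0 0)
  have : (x * (starRingEnd ℂ) x - -(starRingEnd ℂ) y * y).re
      = Complex.normSq x + Complex.normSq y := by
    simp only [Complex.normSq_apply, Complex.mul_re, Complex.mul_im, Complex.sub_re,
      Complex.neg_re, Complex.neg_im, Complex.conj_re, Complex.conj_im]
    ring
  rw [this]
  rcases (not_and_or.mp hx) with h | h
  · have := Complex.normSq_pos.mpr h
    have := Complex.normSq_nonneg y
    linarith
  · have := Complex.normSq_pos.mpr h
    have := Complex.normSq_nonneg x
    linarith

/-- extract two-sided inverse from IsUnit -/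
lemma isUnit_exists_inv {R : Type} [Monoid R] {a : R} (h : IsUnit a) :
    ∃ b, a * b = 1 ∧ b * a = 1 := by
  obtain ⟨u, hu⟩ := h
  exact ⟨Units.val u⁻¹, by rw [← hu]; exact u.mul_inv, by rw [← hu]; exact u.inv_mul⟩

lemma isUnit_submatrix {m k : Type} [Fintype m] [DecidableEq m] [Fintype k] [DecidableEq k]
    {A : Matrix m m H} (h : IsUnit A) (e : k ≃ m) (f : k ≃ m) :
    IsUnit (A.submatrix e f) := by
  obtain ⟨B, h1, h2⟩ := isUnit_exists_inv h
  refine ⟨⟨A.submatrix e f, B.submatrix f e, ?_, ?_⟩, rfl⟩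
  · have := Matrix.submatrix_mul_equiv A B ⇑e f ⇑e
    rw [this, h1, Matrix.submatrix_one_equiv]
  · have := Matrix.submatrix_mul_equiv B A ⇑f e ⇑f
    rw [this, h2, Matrix.submatrix_one_equiv]

lemma isUnit_triangular_upper {m k : Type} [Fintype m] [DecidableEq m] [Fintype k]
    [DecidableEq k] (B : Matrix m k H) : IsUnit (fromBlocks (1 : Matrix m m H) B (0 : Matrix k m H) (1 : Matrix k k H)) := by
  refine ⟨⟨fromBlocks (1 : Matrix m m H) B (0 : Matrix k m H) (1 : Matrix k k H),
    fromBlocks 1 (-B) 0 1, ?_, ?_⟩, rfl⟩ <;>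
  · rw [Matrix.fromBlocks_multiply]
    simp [← Matrix.fromBlocks_one]

lemma isUnit_triangular_lower {m k : Type} [Fintype m] [DecidableEq m] [Fintype k]
    [DecidableEq k] (C : Matrix k m H) : IsUnit (fromBlocks (1 : Matrix m m H) (0 : Matrix m k H) C (1 : Matrix k k H)) := by
  refine ⟨⟨fromBlocks (1 : Matrix m m H) (0 : Matrix m k H) C (1 : Matrix k k H),
    fromBlocks 1 0 (-C) 1, ?_, ?_⟩, rfl⟩ <;>
  · rw [Matrix.fromBlocks_multiply]
    simp [← Matrix.fromBlocks_one]

lemma isUnit_block_of_isUnit_blockdiag {m k : Type} [Fintype m] [DecidableEq m] [Fintype k]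
    [DecidableEq k] {C : Matrix m m H} {q : Matrix k k H}
    (h : IsUnit (fromBlocks C 0 0 q)) : IsUnit C := by
  obtain ⟨N, h1, h2⟩ := isUnit_exists_inv h
  refine ⟨⟨C, N.toBlocks₁₁, ?_, ?_⟩, rfl⟩
  · have := congrArg Matrix.toBlocks₁₁ h1
    rw [← Matrix.fromBlocks_toBlocks N, Matrix.fromBlocks_multiply] at this
    exact Matrix.ext fun i j => by simpa [Matrix.toBlocks₁₁, Matrix.one_apply] using congrFun₂ this i j
  · have := congrArg Matrix.toBlocks₁₁ h2
    rw [← Matrix.fromBlocks_toBlocks N, Matrix.fromBlocks_multiply] at this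
    exact Matrix.ext fun i j => by simpa [Matrix.toBlocks₁₁, Matrix.one_apply] using congrFun₂ this i j

lemma det_cMat_pos : ∀ {n : ℕ} (A : Matrix (Fin n) (Fin n) H), IsUnit A →
    0 < (det (cMat A)).re := by
  intro n
  induction n with
  | zero =>
    intro A _
    rw [Matrix.det_isEmpty]
    simp
  | succ n ih =>
    intro A hA
    have hcol : ∃ i, A i (Fin.last n) ≠ 0 := by
      by_contra hcontra
      push_neg at hcontra
      obtain ⟨B, h1, h2⟩ := isUnit_exists_inv hA
      have h3 := congrFun (congrFun h2 (Fin.last n)) (Fin.last n)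
      simp [Matrix.mul_apply, hcontra, Matrix.one_apply] at h3
    obtain ⟨i0, hi0⟩ := hcol
    set σ : Equiv.Perm (Fin (n+1)) := Equiv.swap i0 (Fin.last n) with hσ
    set A' := A.submatrix σ id with hA'def
    have hdetA' : det (cMat A') = det (cMat A) := det_cMat_permute σ A
    have hA'unit : IsUnit A' := by
      have : A' = A.submatrix σ (Equiv.refl _) := rfl
      rw [this]
      exact isUnit_submatrix hA σ (Equiv.refl _)
    have hpiv : A' (Fin.last n) (Fin.last n) ≠ 0 := by
      show A (σ (Fin.last n)) (Fin.last n) ≠ 0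
      rw [hσ]
      simpa [Equiv.swap_apply_right] using hi0
    set e : (Fin n ⊕ Fin 1) ≃ Fin (n+1) := finSumFinEquiv with he
    set B := A'.submatrix e e with hBdef
    have hdetB : det (cMat B) = det (cMat A') := det_cMat_submatrix_equiv A' e
    have hBunit : IsUnit B := isUnit_submatrix hA'unit e e
    have hpivB : B (Sum.inr 0) (Sum.inr 0) ≠ 0 := by
      show A' (e (Sum.inr 0)) (e (Sum.inr 0)) ≠ 0
      have h0 : e (Sum.inr 0) = Fin.last n := by
        rw [he, ← finSumFinEquiv_symm_last, Equiv.apply_symm_apply]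
      rw [h0]
      exact hpiv
    set D := B.toBlocks₁₁ with hD
    set u := B.toBlocks₁₂ with hu
    set v := B.toBlocks₂₁ with hv
    set q := B.toBlocks₂₂ with hq'
    have hq : q 0 0 ≠ 0 := hpivB
    set r : Matrix (Fin 1) (Fin 1) H := Matrix.of fun _ _ => (q 0 0)⁻¹ with hr
    have hqr : q * r = 1 := by
      refine Matrix.ext fun i j => ?_
      rw [Subsingleton.elim i 0, Subsingleton.elim j 0]
      simp [Matrix.mul_apply, hr, Matrix.one_apply, mul_inv_cancel₀ hq]
    have hrq : r * q = 1 := by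
      refine Matrix.ext fun i j => ?_
      rw [Subsingleton.elim i 0, Subsingleton.elim j 0]
      simp [Matrix.mul_apply, hr, Matrix.one_apply, inv_mul_cancel₀ hq]
    set L := fromBlocks (1 : Matrix (Fin n) (Fin n) H) (u * r)
      (0 : Matrix (Fin 1) (Fin n) H) (1 : Matrix (Fin 1) (Fin 1) H) with hL
    set U := fromBlocks (1 : Matrix (Fin n) (Fin n) H) (0 : Matrix (Fin n) (Fin 1) H)
      (r * v) (1 : Matrix (Fin 1) (Fin 1) H) with hU
    set C := D - u * r * v with hC
    set Mid := fromBlocks C (0 : Matrix (Fin n) (Fin 1) H)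
      (0 : Matrix (Fin 1) (Fin n) H) q with hMid
    have h1 : L * Mid = fromBlocks C u 0 q := by
      rw [hL, hMid, Matrix.fromBlocks_multiply]
      simp only [Matrix.one_mul, Matrix.mul_zero, Matrix.zero_mul, Matrix.mul_one,
        add_zero, zero_add, Matrix.mul_assoc, hrq]
    have h2 : (fromBlocks C u (0 : Matrix (Fin 1) (Fin n) H) q) * U = fromBlocks D u v q := by
      rw [hU, Matrix.fromBlocks_multiply]
      simp only [Matrix.one_mul, Matrix.mul_zero, Matrix.zero_mul, Matrix.mul_one,
        add_zero, zero_add]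
      rw [hC, ← Matrix.mul_assoc q r v, hqr, Matrix.one_mul,
        ← Matrix.mul_assoc u r v]
      rw [sub_add_cancel]
    have hdecomp : B = L * Mid * U := by
      rw [h1, h2]
      exact (Matrix.fromBlocks_toBlocks B).symm
    have hdetMid : det (cMat B) = det (cMat C) * det (cMat q) := by
      rw [hdecomp, cMat_mul, cMat_mul, det_mul, det_mul, hL, hU, hMid,
        det_cMat_upper, det_cMat_lower, det_cMat_blockdiag]
      ring
    have hLu := isUnit_triangular_upper (u * r)
    have hUu := isUnit_triangular_lower (r * v)
    rw [← hL] at hLu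
    rw [← hU] at hUu
    have hMidUnit : IsUnit Mid := by
      obtain ⟨Li, hL1, hL2⟩ := isUnit_exists_inv hLu
      obtain ⟨Ui, hU1, hU2⟩ := isUnit_exists_inv hUu
      have hmid : Mid = Li * B * Ui := by
        rw [hdecomp]
        symm
        calc Li * (L * Mid * U) * Ui
            = (Li * L) * Mid * (U * Ui) := by simp only [Matrix.mul_assoc]
          _ = Mid := by rw [hL2, hU1, Matrix.one_mul, Matrix.mul_one]
      rw [hmid]
      have hLiu : IsUnit Li := ⟨⟨Li, L, hL2, hL1⟩, rfl⟩
      have hUiu : IsUnit Ui := ⟨⟨Ui, U, hU2, hU1⟩, rfl⟩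
      exact (hLiu.mul hBunit).mul hUiu
    have hCunit : IsUnit C := isUnit_block_of_isUnit_blockdiag (hMid ▸ hMidUnit)
    have hCpos := ih C hCunit
    have hqpos := det_cMat_one_dim q hq
    have hCim := im_det_cMat C
    have hre : (det (cMat B)).re = (det (cMat C)).re * (det (cMat q)).re := by
      rw [hdetMid, Complex.mul_re, hCim]
      ring
    have : (det (cMat A)).re = (det (cMat B)).re := by rw [hdetB, hdetA']
    rw [this, hre]
    exact mul_pos hCpos hqpos

theorem stmt_10 {n : ℕ} (A : Matrix (Fin n) (Fin n) (Quaternion ℝ)) :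
    0 < Sdet A ↔ IsUnit A := by
  rw [Sdet, Real.sqrt_pos]
  constructor
  · intro h
    have hdet : (cMat A).det ≠ 0 := by
      intro h0
      rw [h0] at h
      simp at h
    have hunit : IsUnit (cMat A) :=
      (Matrix.isUnit_iff_isUnit_det _).mpr (isUnit_iff_ne_zero.mpr hdet)
    exact (isUnit_cMat_iff A).mp hunit
  · intro h
    exact det_cMat_pos A h
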